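/- Let E₁,…,Eₙ,F be Banach spaces over 𝕂 (ℝ or ℂ), let T : E₁×⋯×Eₙ → F be a continuous n-linear mapping and let (a₁,…,aₙ) ∈ E₁×⋯×Eₙ. If (x_j^{(s)})_{j=1}^∞ ∈ ℓ₁^w(E_s) for each s = 1,…,n, then the sequence (T(a₁+x_j^{(1)},…,aₙ+x_j^{(n)}) − T(a₁,…,aₙ))_{j=1}^∞ belongs to ℓ₁^w(F); that is, ∑_j |ψ(T(a₁+x_j^{(1)},…,aₙ+x_j^{(n)}) − T(a₁,…,aₙ))| < ∞ for every continuous linear functional ψ on F. -/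

import Mathlib

open scoped ENNReal NNReal

noncomputable section

/-- A sequence `x` in `E` is weakly `q`-summable (`0 < q < ∞`), i.e. belongs to `ℓ_q^w(E)`:
`∑_j ‖φ (x j)‖^q < ∞` for every continuous linear functional `φ`. -/
def WeaklySummable (𝕜 : Type*) [RCLike 𝕜] {E : Type*} [NormedAddCommGroup E]
    [NormedSpace 𝕜 E] (q : ℝ) (x : ℕ → E) : Prop :=
  ∀ φ : E →L[𝕜] 𝕜, Summable fun j => ‖φ (x j)‖ ^ q

section Aux

variable {𝕜 : Type*} [RCLike 𝕜]

open Finset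

lemma exists_unimodular (z : 𝕜) : ∃ d : 𝕜, ‖d‖ = 1 ∧ d * z = (‖z‖ : 𝕜) := by
  by_cases h : z = 0
  · exact ⟨1, norm_one, by simp [h]⟩
  · refine ⟨(starRingEnd 𝕜) z / ‖z‖, ?_, ?_⟩
    · rw [norm_div]
      simp [norm_ne_zero_iff.2 h]
    · rw [div_mul_eq_mul_div, RCLike.conj_mul]
      rw [show ((‖z‖:𝕜)^2 : 𝕜) = (‖z‖:𝕜) * ‖z‖ by ring]
      rw [mul_div_assoc, div_self (by exact_mod_cast norm_ne_zero_iff.2 h), mul_one]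

lemma weak_bound {E : Type*} [NormedAddCommGroup E] [NormedSpace 𝕜 E]
    (x : ℕ → E) (hx : ∀ φ : E →L[𝕜] 𝕜, Summable fun j => ‖φ (x j)‖) :
    ∃ W : ℝ, 0 ≤ W ∧ ∀ (S : Finset ℕ) (c : ℕ → 𝕜), (∀ j, ‖c j‖ ≤ 1) →
      ‖∑ j ∈ S, c j • x j‖ ≤ W := by
  classical
  set g : Finset ℕ × {c : ℕ → 𝕜 // ∀ j, ‖c j‖ ≤ 1} → (E →L[𝕜] 𝕜) →L[𝕜] 𝕜 :=
    fun p => ∑ j ∈ p.1, p.2.1 j • NormedSpace.inclusionInDoubleDual 𝕜 E (x j) with hg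
  have hgev : ∀ p φ, g p φ = ∑ j ∈ p.1, p.2.1 j * φ (x j) := by
    intro p φ
    simp [hg, ContinuousLinearMap.sum_apply, NormedSpace.dual_def]
  have hpt : ∀ φ : E →L[𝕜] 𝕜, ∃ C, ∀ p, ‖g p φ‖ ≤ C := by
    intro φ
    refine ⟨∑' j, ‖φ (x j)‖, fun p => ?_⟩
    rw [hgev]
    calc ‖∑ j ∈ p.1, p.2.1 j * φ (x j)‖ ≤ ∑ j ∈ p.1, ‖p.2.1 j * φ (x j)‖ := norm_sum_le _ _
      _ ≤ ∑ j ∈ p.1, ‖φ (x j)‖ := by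
          refine Finset.sum_le_sum fun j _ => ?_
          rw [norm_mul]
          exact mul_le_of_le_one_left (norm_nonneg _) (p.2.2 j)
      _ ≤ ∑' j, ‖φ (x j)‖ := Summable.sum_le_tsum _ (fun _ _ => norm_nonneg _) (hx φ)
  obtain ⟨C', hC'⟩ := banach_steinhaus hpt
  refine ⟨max C' 0, le_max_right _ _, fun S c hc => ?_⟩
  refine NormedSpace.norm_le_dual_bound 𝕜 _ (le_max_right _ _) fun φ => ?_
  have : φ (∑ j ∈ S, c j • x j) = g (S, ⟨c, hc⟩) φ := by
    rw [hgev]; simp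
  rw [this]
  calc ‖g (S, ⟨c, hc⟩) φ‖ ≤ ‖g (S, ⟨c, hc⟩)‖ * ‖φ‖ := ContinuousLinearMap.le_opNorm _ _
    _ ≤ max C' 0 * ‖φ‖ := by
        gcongr
        exact (hC' _).trans (le_max_left _ _)

lemma helper_prod_ite {α : Type*} [Fintype α] [DecidableEq α] (b : α) (f : α → 𝕜) :
    ∏ x : α, (if x = b then f x else 1) = f b := by simp

set_option maxHeartbeats 1600000 in
lemma key_diag {n : ℕ} {E : Fin n → Type*} [∀ i, NormedAddCommGroup (E i)]
    [∀ i, NormedSpace 𝕜 (E i)]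
    (A : ContinuousMultilinearMap 𝕜 E 𝕜) (a : ∀ i, E i) (x : ∀ i, ℕ → E i)
    (hx : ∀ i, ∀ φ : E i →L[𝕜] 𝕜, Summable fun j => ‖φ (x i j)‖)
    (t : Finset (Fin n)) (ht : t.Nonempty) :
    Summable fun j => ‖A (t.piecewise (fun i => x i j) a)‖ := by
  classical
  obtain ⟨s₀, hs₀⟩ := ht
  choose W hW0 hW using fun i => weak_bound (x i) (hx i)
  set C : ℝ := ‖A‖ * ∏ i, (if i ∈ t then W i else ‖a i‖) with hC
  refine summable_of_sum_le (c := C) (fun j => norm_nonneg _) fun S => ?_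
  set z : ℕ → 𝕜 := fun j => A (t.piecewise (fun i => x i j) a) with hz
  choose d hd1 hdz using fun j => exists_unimodular (z j)
  set t' : Finset (Fin n) := t.erase s₀ with ht'
  have ht'sub : ∀ i ∈ t', i ∈ t := fun i hi => Finset.mem_of_mem_erase hi
  have hrs : ∀ i ∈ t', i ≠ s₀ := fun i hi => Finset.ne_of_mem_erase hi
  set N : ℕ := Fintype.card (↥t' × ↥S) with hN
  set χ : Bool → 𝕜 := fun b => if b then 1 else -1 with hχ
  have hχnorm : ∀ b, ‖χ b‖ = 1 := by intro b; cases b <;> simp [hχ]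
  set sgn : ((↥t' × ↥S) → Bool) → Fin n → ℕ → 𝕜 := fun ω i j =>
    if h : i ∈ t' ∧ j ∈ S then χ (ω (⟨i, h.1⟩, ⟨j, h.2⟩)) else 1 with hsgn
  have hsgnnorm : ∀ ω i j, ‖sgn ω i j‖ = 1 := by
    intro ω i j
    simp only [hsgn]
    split
    · exact hχnorm _
    · simp
  set coeff : ((↥t' × ↥S) → Bool) → Fin n → ℕ → 𝕜 := fun ω i j =>
    if i = s₀ then d j * ∏ i' ∈ t', sgn ω i' j else sgn ω i j with hcoeff
  have hcoeffnorm : ∀ ω i j, ‖coeff ω i j‖ ≤ 1 := by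
    intro ω i j
    simp only [hcoeff]
    split
    · rw [norm_mul, hd1 j, one_mul]
      calc ‖∏ i' ∈ t', sgn ω i' j‖ ≤ ∏ i' ∈ t', ‖sgn ω i' j‖ := norm_prod_le _ _
        _ = 1 := by simp [hsgnnorm]
    · exact le_of_eq (hsgnnorm _ _ _)
  set v : ((↥t' × ↥S) → Bool) → ∀ i, E i := fun ω =>
    t.piecewise (fun i => ∑ j ∈ S, coeff ω i j • x i j) a with hv
  -- Claim 1 : uniform bound
  have claim1 : ∀ ω, ‖A (v ω)‖ ≤ C := by
    intro ω
    calc ‖A (v ω)‖ ≤ ‖A‖ * ∏ i, ‖v ω i‖ := A.le_opNorm _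
      _ ≤ C := by
          rw [hC]
          refine mul_le_mul_of_nonneg_left ?_ (norm_nonneg _)
          refine Finset.prod_le_prod (fun i _ => norm_nonneg _) fun i _ => ?_
          by_cases hi : i ∈ t
          · rw [if_pos hi]
            have hvi : v ω i = ∑ j ∈ S, coeff ω i j • x i j :=
              Finset.piecewise_eq_of_mem _ _ _ hi
            rw [hvi]
            exact hW i S (coeff ω i) (fun j => hcoeffnorm ω i j)
          · rw [if_neg hi]
            have hvi : v ω i = a i := Finset.piecewise_eq_of_notMem _ _ _ hi
            rw [hvi]
  -- data for expansion
  set B : Fin n → Finset ℕ := fun i => if i ∈ t then S else {0} with hB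
  set e : ((↥t' × ↥S) → Bool) → Fin n → ℕ → 𝕜 := fun ω i j =>
    if i ∈ t then coeff ω i j else 1 with he
  set y : (Fin n → ℕ) → ∀ i, E i := fun r i => if i ∈ t then x i (r i) else a i with hy
  have expand : ∀ ω, A (v ω) =
      ∑ r ∈ Fintype.piFinset B, (∏ i, e ω i (r i)) • A (y r) := by
    intro ω
    have hv2 : v ω = fun i => ∑ j ∈ B i, (if h : i ∈ t then coeff ω i j • x i j else a i) := by
      funext i
      by_cases hi : i ∈ t
      · rw [show v ω i = ∑ j ∈ S, coeff ω i j • x i j from Finset.piecewise_eq_of_mem _ _ _ hi]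
        simp only [hB, if_pos hi, dif_pos hi]
      · rw [show v ω i = a i from Finset.piecewise_eq_of_notMem _ _ _ hi]
        simp only [hB, if_neg hi, dif_neg hi]
        simp
    have hexp := A.toMultilinearMap.map_sum_finset
      (fun i j => if h : i ∈ t then coeff ω i j • x i j else a i) B
    rw [hv2]
    refine hexp.trans (Finset.sum_congr rfl fun r hr => ?_)
    have harg : (fun i => if h : i ∈ t then coeff ω i (r i) • x i (r i) else a i)
        = fun i => e ω i (r i) • y r i := by
      funext i
      by_cases hi : i ∈ t <;> simp [he, hy, hi]
    rw [show (A.toMultilinearMap fun i => if h : i ∈ t then coeff ω i (r i) • x i (r i) else a i)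
        = A.toMultilinearMap (fun i => e ω i (r i) • y r i) from by rw [harg]]
    exact A.toMultilinearMap.map_smul_univ _ _
  have swap : ∑ ω : (↥t' × ↥S) → Bool, A (v ω) =
      ∑ r ∈ Fintype.piFinset B, (∑ ω : (↥t' × ↥S) → Bool, ∏ i, e ω i (r i)) • A (y r) := by
    simp_rw [expand]
    rw [Finset.sum_comm]
    exact Finset.sum_congr rfl fun r _ => (Finset.sum_smul).symm
  have orth : ∀ r ∈ Fintype.piFinset B, (∑ ω : (↥t' × ↥S) → Bool, ∏ i, e ω i (r i)) =
      if ∀ i ∈ t', r i = r s₀ then (2:𝕜)^N * d (r s₀) else 0 := by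
    intro r hr
    have hrS : ∀ i ∈ t, r i ∈ S := by
      intro i hi
      have h := Fintype.mem_piFinset.1 hr i
      simpa [hB, hi] using h
    have hrs₀S : r s₀ ∈ S := hrS s₀ hs₀
    have step1 : ∀ ω, ∏ i, e ω i (r i)
        = d (r s₀) * ∏ i ∈ t', (sgn ω i (r i) * sgn ω i (r s₀)) := by
      intro ω
      have h1 : ∏ i, e ω i (r i) = ∏ i ∈ t, coeff ω i (r i) := by
        simp only [he]
        rw [Finset.prod_ite_mem univ t fun i => coeff ω i (r i), Finset.univ_inter]
      have h2 : ∏ i ∈ t, coeff ω i (r i) = coeff ω s₀ (r s₀) * ∏ i ∈ t', coeff ω i (r i) :=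
        (Finset.mul_prod_erase t _ hs₀).symm
      have h3 : ∏ i ∈ t', coeff ω i (r i) = ∏ i ∈ t', sgn ω i (r i) :=
        Finset.prod_congr rfl fun i hi => by simp only [hcoeff, if_neg (hrs i hi)]
      have h4 : coeff ω s₀ (r s₀) = d (r s₀) * ∏ i' ∈ t', sgn ω i' (r s₀) := by
        simp only [hcoeff, if_pos rfl]
      rw [h1, h2, h3, h4, mul_assoc, ← Finset.prod_mul_distrib]
      congr 1
      exact Finset.prod_congr rfl fun i _ => mul_comm _ _
    set G : (↥t' × ↥S) → Bool → 𝕜 := fun p b =>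
      (if (p.2 : ℕ) = r p.1 then χ b else 1) * (if (p.2 : ℕ) = r s₀ then χ b else 1) with hG
    have inner : ∀ ω, ∀ i : ↥t', ∏ j : ↥S, G (i, j) (ω (i, j))
        = sgn ω ↑i (r ↑i) * sgn ω ↑i (r s₀) := by
      intro ω i
      have hmemi : r ↑i ∈ S := hrS _ (ht'sub _ i.2)
      have hsgn1 : ∀ (m : ℕ) (hm : m ∈ S),
          (∏ j : ↥S, if (j : ℕ) = m then χ (ω (i, j)) else 1) = sgn ω ↑i m := by
        intro m hm
        have hmem' : (↑i ∈ t' ∧ m ∈ S) := ⟨i.2, hm⟩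
        have h2 : ∀ j : ↥S, ((j : ℕ) = m) = (j = (⟨m, hm⟩ : ↥S)) := fun j =>
          propext (by rw [Subtype.ext_iff])
        calc (∏ j : ↥S, if (j : ℕ) = m then χ (ω (i, j)) else 1)
            = ∏ j : ↥S, (if j = (⟨m, hm⟩ : ↥S) then χ (ω (i, j)) else 1) := by
              refine Finset.prod_congr rfl fun j _ => ?_
              simp only [h2]
          _ = χ (ω (i, ⟨m, hm⟩)) := helper_prod_ite _ _
          _ = sgn ω ↑i m := by simp only [hsgn, dif_pos hmem']
      calc ∏ j : ↥S, G (i, j) (ω (i, j))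
          = (∏ j : ↥S, if (j : ℕ) = r ↑i then χ (ω (i, j)) else 1) *
            (∏ j : ↥S, if (j : ℕ) = r s₀ then χ (ω (i, j)) else 1) := by
            rw [← Finset.prod_mul_distrib]
        _ = sgn ω ↑i (r ↑i) * sgn ω ↑i (r s₀) := by
            rw [hsgn1 _ hmemi, hsgn1 _ hrs₀S]
    have step2a : ∀ ω, ∏ i ∈ t', (sgn ω i (r i) * sgn ω i (r s₀))
        = ∏ p : ↥t' × ↥S, G p (ω p) := by
      intro ω
      calc ∏ i ∈ t', (sgn ω i (r i) * sgn ω i (r s₀))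
          = ∏ i : ↥t', (sgn ω ↑i (r ↑i) * sgn ω ↑i (r s₀)) := (Finset.prod_coe_sort _ _).symm
        _ = ∏ i : ↥t', ∏ j : ↥S, G (i, j) (ω (i, j)) :=
            Finset.prod_congr rfl fun i _ => (inner ω i).symm
        _ = ∏ p : ↥t' × ↥S, G p (ω p) := (Fintype.prod_prod_type (fun p => G p (ω p))).symm
    have step2b : ∑ ω : (↥t' × ↥S) → Bool, ∏ p : ↥t' × ↥S, G p (ω p)
        = ∏ p : ↥t' × ↥S, (G p true + G p false) := by
      rw [show (univ : Finset ((↥t' × ↥S) → Bool)) = Fintype.piFinset (fun _ => univ) from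
        (Fintype.piFinset_univ).symm]
      rw [← Finset.prod_univ_sum]
      exact Finset.prod_congr rfl fun p _ => by simp
    have hval : ∀ p : ↥t' × ↥S, G p true + G p false
        = if (((p.2 : ℕ) = r ↑p.1) ↔ ((p.2 : ℕ) = r s₀)) then (2:𝕜) else 0 := by
      have habs : ∀ (c1 c2 : Prop) (d1 : Decidable c1) (d2 : Decidable c2),
          ((@ite _ c1 d1 (χ true) 1) * (@ite _ c2 d2 (χ true) 1) +
            (@ite _ c1 d1 (χ false) 1) * (@ite _ c2 d2 (χ false) 1))
          = if (c1 ↔ c2) then (2:𝕜) else 0 := by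
        intro c1 c2 d1 d2
        by_cases h1 : c1 <;> by_cases h2 : c2 <;>
          simp [h1, h2, hχ] <;> norm_num
      intro p
      simp only [hG]
      exact habs _ _ _ _
    have main : ∑ ω : (↥t' × ↥S) → Bool, ∏ i, e ω i (r i) = d (r s₀) *
        ∏ p : ↥t' × ↥S, (if (((p.2 : ℕ) = r ↑p.1) ↔ ((p.2 : ℕ) = r s₀)) then (2:𝕜) else 0) := by
      calc ∑ ω : (↥t' × ↥S) → Bool, ∏ i, e ω i (r i)
          = ∑ ω : (↥t' × ↥S) → Bool, d (r s₀) * ∏ p : ↥t' × ↥S, G p (ω p) :=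
            Finset.sum_congr rfl fun ω _ => by rw [step1 ω, step2a ω]
        _ = d (r s₀) * ∑ ω : (↥t' × ↥S) → Bool, ∏ p : ↥t' × ↥S, G p (ω p) := by
            rw [Finset.mul_sum]
        _ = d (r s₀) * ∏ p : ↥t' × ↥S, (G p true + G p false) := by rw [step2b]
        _ = _ := by rw [Finset.prod_congr rfl fun p _ => hval p]
    rw [main]
    by_cases hdiag : ∀ i ∈ t', r i = r s₀
    · rw [if_pos hdiag]
      have hcond : ∀ p : ↥t' × ↥S, (((p.2 : ℕ) = r ↑p.1) ↔ ((p.2 : ℕ) = r s₀)) := fun p => by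
        rw [hdiag ↑p.1 p.1.2]
      rw [Finset.prod_congr rfl fun p _ => if_pos (hcond p)]
      rw [Finset.prod_const, Finset.card_univ, ← hN]
      ring
    · rw [if_neg hdiag]
      push_neg at hdiag
      obtain ⟨i₀, hi₀t, hi₀⟩ := hdiag
      have hmem : r i₀ ∈ S := hrS _ (ht'sub _ hi₀t)
      have : (∏ p : ↥t' × ↥S,
          (if (((p.2 : ℕ) = r ↑p.1) ↔ ((p.2 : ℕ) = r s₀)) then (2:𝕜) else 0)) = 0 := by
        refine Finset.prod_eq_zero (Finset.mem_univ ((⟨i₀, hi₀t⟩, ⟨r i₀, hmem⟩) : ↥t' × ↥S)) ?_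
        exact if_neg fun hiff => hi₀ (hiff.1 rfl)
      rw [this, mul_zero]
  have reindex : ∑ r ∈ Fintype.piFinset B,
      (if ∀ i ∈ t', r i = r s₀ then (2:𝕜)^N * d (r s₀) else 0) • A (y r)
      = ∑ j ∈ S, ((2:𝕜)^N * d j) • z j := by
    have h1 : ∀ r : Fin n → ℕ, (if ∀ i ∈ t', r i = r s₀ then (2:𝕜)^N * d (r s₀) else 0) • A (y r)
        = if ∀ i ∈ t', r i = r s₀ then ((2:𝕜)^N * d (r s₀)) • A (y r) else 0 := by
      intro r; split <;> simp
    rw [Finset.sum_congr rfl fun r _ => h1 r]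
    rw [← Finset.sum_filter]
    set P : (Fin n → ℕ) → Prop := fun r => ∀ i ∈ t', r i = r s₀ with hP
    have hconst : ∀ r ∈ (Fintype.piFinset B).filter P, ∀ i ∈ t, r i = r s₀ := by
      intro r hr i hi
      rcases Finset.mem_filter.1 hr with ⟨-, h⟩
      by_cases his : i = s₀
      · rw [his]
      · exact h i (Finset.mem_erase.2 ⟨his, hi⟩)
    have hzero : ∀ r ∈ (Fintype.piFinset B).filter P, ∀ i, i ∉ t → r i = 0 := by
      intro r hr i hi
      have h := Fintype.mem_piFinset.1 (Finset.mem_filter.1 hr).1 i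
      simpa [hB, hi] using h
    refine Finset.sum_nbij' (i := fun r => r s₀) (j := fun j => fun i => if i ∈ t then j else 0)
      ?_ ?_ ?_ ?_ ?_
    · intro r hr
      have h := Fintype.mem_piFinset.1 (Finset.mem_filter.1 hr).1 s₀
      simpa [hB, hs₀] using h
    · intro j hj
      refine Finset.mem_filter.2 ⟨Fintype.mem_piFinset.2 fun i => ?_, fun i hi => ?_⟩
      · by_cases hi : i ∈ t <;> simp [hB, hi, hj]
      · simp [ht'sub i hi, hs₀]
    · intro r hr
      funext i
      show (if i ∈ t then r s₀ else 0) = r i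
      by_cases hi : i ∈ t
      · rw [if_pos hi, (hconst r hr i hi).symm]
      · rw [if_neg hi, (hzero r hr i hi).symm]
    · intro j hj
      simp [hs₀]
    · intro r hr
      have hyr : y r = t.piecewise (fun i => x i (r s₀)) a := by
        funext i
        by_cases hi : i ∈ t
        · rw [Finset.piecewise_eq_of_mem _ _ _ hi]
          simp only [hy, if_pos hi, hconst r hr i hi]
        · rw [Finset.piecewise_eq_of_notMem _ _ _ hi]
          simp only [hy, if_neg hi]
      rw [hyr]
  have hsum : ∑ ω : (↥t' × ↥S) → Bool, A (v ω) = (2:𝕜)^N * ((∑ j ∈ S, ‖z j‖ : ℝ) : 𝕜) := by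
    rw [swap]
    have step : ∑ r ∈ Fintype.piFinset B,
        (∑ ω : (↥t' × ↥S) → Bool, ∏ i, e ω i (r i)) • A (y r)
        = ∑ r ∈ Fintype.piFinset B,
        (if ∀ i ∈ t', r i = r s₀ then (2:𝕜)^N * d (r s₀) else 0) • A (y r) :=
      Finset.sum_congr rfl fun r hr => by rw [orth r hr]
    rw [step, reindex]
    simp_rw [smul_eq_mul, mul_assoc]
    rw [← Finset.mul_sum]
    congr 1
    rw [Finset.sum_congr rfl fun j _ => hdz j]
    push_cast
    rfl
  have hnorm : (2:ℝ)^N * ∑ j ∈ S, ‖z j‖ ≤ (2:ℝ)^N * C := by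
    have h1 : ‖∑ ω : (↥t' × ↥S) → Bool, A (v ω)‖ ≤ (2:ℝ)^N * C := by
      calc ‖∑ ω : (↥t' × ↥S) → Bool, A (v ω)‖
          ≤ ∑ ω : (↥t' × ↥S) → Bool, ‖A (v ω)‖ := norm_sum_le _ _
        _ ≤ ∑ _ω : (↥t' × ↥S) → Bool, C := Finset.sum_le_sum fun ω _ => claim1 ω
        _ = (2:ℝ)^N * C := by
            rw [Finset.sum_const, Finset.card_univ, Fintype.card_fun]
            simp [hN, nsmul_eq_mul]
    have h2 : ‖(2:𝕜)^N * ((∑ j ∈ S, ‖z j‖ : ℝ) : 𝕜)‖ = (2:ℝ)^N * ∑ j ∈ S, ‖z j‖ := by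
      rw [norm_mul, norm_pow, RCLike.norm_ofNat, RCLike.norm_ofReal]
      rw [abs_of_nonneg (Finset.sum_nonneg fun j _ => norm_nonneg _)]
    rw [← h2, ← hsum]
    exact h1
  have h2pos : (0:ℝ) < (2:ℝ)^N := by positivity
  exact le_of_mul_le_mul_left hnorm h2pos

lemma summable_finset_sum' {ι : Type*} {f : ι → ℕ → ℝ} (s : Finset ι)
    (h : ∀ i ∈ s, Summable (f i)) : Summable (fun j => ∑ i ∈ s, f i j) := by
  classical
  induction s using Finset.induction_on with
  | empty => simpa using summable_zero
  | insert a s2 hnot ih =>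
      simp only [Finset.sum_insert hnot]
      exact (h a (Finset.mem_insert_self a s2)).add
        (ih fun i hi => h i (Finset.mem_insert_of_mem hi))

end Aux

set_option maxHeartbeats 800000 in
/-- If `T : E₁ × ⋯ × Eₙ → F` is a continuous `n`-linear map between Banach
spaces, `(a₁,…,aₙ)` is any point, and `(x_j^{(s)})_j ∈ ℓ₁^w(E_s)` for every `s`, then the
sequence `(T(a₁+x_j^{(1)},…,aₙ+x_j^{(n)}) − T(a₁,…,aₙ))_j` belongs to `ℓ₁^w(F)`. -/
theorem multilinear_translate_mem_weak_l1
    {𝕜 : Type*} [RCLike 𝕜] {n : ℕ} {E : Fin n → Type*}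
    [∀ i, NormedAddCommGroup (E i)] [∀ i, NormedSpace 𝕜 (E i)] [∀ i, CompleteSpace (E i)]
    {F : Type*} [NormedAddCommGroup F] [NormedSpace 𝕜 F] [CompleteSpace F]
    (T : ContinuousMultilinearMap 𝕜 E F) (a : ∀ i, E i)
    (x : ∀ i, ℕ → E i) (hx : ∀ i, WeaklySummable 𝕜 1 (x i)) :
    WeaklySummable 𝕜 1 (fun j => T (fun i => a i + x i j) - T a) := by
  classical
  intro ψ
  simp only [Real.rpow_one]
  set A : ContinuousMultilinearMap 𝕜 E 𝕜 := ψ.compContinuousMultilinearMap T with hA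
  have hAx : ∀ i, ∀ φ : E i →L[𝕜] 𝕜, Summable fun j => ‖φ (x i j)‖ := by
    intro i φ
    have h := hx i φ
    simpa [Real.rpow_one] using h
  have hdecomp : ∀ j : ℕ, ψ (T (fun i => a i + x i j) - T a)
      = ∑ s ∈ (Finset.univ : Finset (Finset (Fin n))).erase ∅,
          A (s.piecewise (fun i => x i j) a) := by
    intro j
    have h1 : (fun i => a i + x i j) = (fun i => x i j) + a := by
      funext i; simp [add_comm]
    have h2 : A (fun i => a i + x i j)
        = ∑ s : Finset (Fin n), A (s.piecewise (fun i => x i j) a) := by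
      rw [h1]
      exact A.toMultilinearMap.map_add_univ _ _
    have h3 : ∑ s : Finset (Fin n), A (s.piecewise (fun i => x i j) a)
        = A (Finset.piecewise ∅ (fun i => x i j) a)
          + ∑ s ∈ (Finset.univ : Finset (Finset (Fin n))).erase ∅,
              A (s.piecewise (fun i => x i j) a) :=
      (Finset.add_sum_erase _ _ (Finset.mem_univ ∅)).symm
    have h4 : Finset.piecewise ∅ (fun i => x i j) a = a := by
      funext i; simp
    have h5 : ψ (T (fun i => a i + x i j) - T a) = A (fun i => a i + x i j) - A a := by
      rw [map_sub]; rfl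
    rw [h5, h2, h3, h4]
    ring
  have hsummable : ∀ s ∈ (Finset.univ : Finset (Finset (Fin n))).erase ∅,
      Summable fun j => ‖A (s.piecewise (fun i => x i j) a)‖ := by
    intro s hs
    exact key_diag A a x hAx s (Finset.nonempty_iff_ne_empty.2 (Finset.ne_of_mem_erase hs))
  have hsum2 : Summable fun j => ∑ s ∈ (Finset.univ : Finset (Finset (Fin n))).erase ∅,
      ‖A (s.piecewise (fun i => x i j) a)‖ := summable_finset_sum' _ hsummable
  refine Summable.of_nonneg_of_le (fun j => norm_nonneg _) (fun j => ?_) hsum2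
  rw [hdecomp j]
  exact norm_sum_le _ _
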